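/- Let G be a finite simple graph and let [V_0, V_1, …, V_p] (p ≥ 1) be a separation of G. Then the subgraphs G[V_0], G(V_1), …, G(V_p) form a disjoint partition of the edges of G: every edge of G lies in exactly one of the edge sets E(G[V_0]), E(G(V_1)), …, E(G(V_p)). -/

import Mathlib

/-- `Nbr G V`: vertices outside `V` adjacent in `G` to some vertex of `V`. -/
def Nbr {α : Type*} (G : SimpleGraph α) (V : Set α) : Set α :=
  {v | v ∉ V ∧ ∃ u ∈ V, G.Adj u v}


/-- `gSub G V` is the subgraph `G(V)`: induced by `V ∪ Nbr G V`, with the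
edges joining two vertices of `Nbr G V` removed. -/
def gSub {α : Type*} (G : SimpleGraph α) (V : Set α) : G.Subgraph where
  verts := V ∪ Nbr G V
  Adj u v := G.Adj u v ∧ (u ∈ V ∨ v ∈ V)
  adj_sub h := h.1
  edge_vert {u v} h := by
    rcases h.2 with hu | hv
    · exact Or.inl hu
    · by_cases hu : u ∈ V
      · exact Or.inl hu
      · exact Or.inr ⟨hu, v, hv, h.1.symm⟩
  symm := ⟨fun _ _ h => ⟨h.1.symm, h.2.symm⟩⟩


/-- `gInd G V` is the induced subgraph `G[V]`. -/
def gInd {α : Type*} (G : SimpleGraph α) (V : Set α) : G.Subgraph where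
  verts := V
  Adj u v := G.Adj u v ∧ u ∈ V ∧ v ∈ V
  adj_sub h := h.1
  edge_vert h := h.2.1
  symm := ⟨fun _ _ h => ⟨h.1.symm, h.2.2, h.2.1⟩⟩

/-- For a separation `[V 0, V 1, …, V p]` of a finite simple graph `G`, the
subgraphs `G[V 0], G(V 1), …, G(V p)` form a disjoint partition of the edges
of `G`: every edge of `G` lies in exactly one of their edge sets. -/
theorem separation_edge_partition {α : Type*} [Fintype α] (G : SimpleGraph α)
    (p : ℕ) (V : ℕ → Set α) (hp : 1 ≤ p)
    (hdisj : ∀ i i', i ≤ p → i' ≤ p → i ≠ i' → Disjoint (V i) (V i'))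
    (hcover : ∀ v, ∃ i, i ≤ p ∧ v ∈ V i)
    (hsep : ∀ i i', 1 ≤ i → i ≤ p → 1 ≤ i' → i' ≤ p → i ≠ i' →
      ∀ u ∈ V i, ∀ w ∈ V i', ¬ G.Adj u w) :
    ∀ e ∈ G.edgeSet, ∃! i, i ≤ p ∧
      e ∈ (if i = 0 then (gInd G (V 0)).edgeSet else (gSub G (V i)).edgeSet) := by
  intro e
  induction e using Sym2.ind with
  | _ u v =>
  intro he
  rw [SimpleGraph.mem_edgeSet] at he
  obtain ⟨i, hip, hui⟩ := hcover u
  obtain ⟨j, hjp, hvj⟩ := hcover v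
  -- helper: unique index among ≥1 indices containing a vertex
  have key : ∀ y, y ≤ p → ∀ k, k ≤ p → ∀ x, x ∈ V y → x ∈ V k → y = k := by
    intro y hy k hk x hxy hxk
    by_contra hne
    exact Set.disjoint_left.mp (hdisj y k hy hk hne) hxy hxk
  by_cases hi0 : i = 0
  · by_cases hj0 : j = 0
    · subst hi0; subst hj0
      refine ⟨0, ⟨Nat.zero_le p, ?_⟩, ?_⟩
      · simp only [if_pos rfl]
        exact (SimpleGraph.Subgraph.mem_edgeSet).mpr ⟨he, hui, hvj⟩
      · rintro y ⟨hyp, hy⟩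
        by_contra hy0
        rw [if_neg hy0] at hy
        have := (SimpleGraph.Subgraph.mem_edgeSet).mp hy
        rcases this.2 with h | h
        · exact absurd (key y hyp 0 (Nat.zero_le p) u h hui) hy0
        · exact absurd (key y hyp 0 (Nat.zero_le p) v h hvj) hy0
    · -- j ≠ 0, v ∈ V j with j ≥ 1
      subst hi0
      refine ⟨j, ⟨hjp, ?_⟩, ?_⟩
      · rw [if_neg hj0]
        exact (SimpleGraph.Subgraph.mem_edgeSet).mpr ⟨he, Or.inr hvj⟩
      · rintro y ⟨hyp, hy⟩
        by_cases hy0 : y = 0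
        · subst hy0
          rw [if_pos rfl] at hy
          have := (SimpleGraph.Subgraph.mem_edgeSet).mp hy
          exact absurd (key 0 (Nat.zero_le p) j hjp v this.2.2 hvj).symm hj0
        · rw [if_neg hy0] at hy
          have := (SimpleGraph.Subgraph.mem_edgeSet).mp hy
          rcases this.2 with h | h
          · -- u ∈ V y, u ∈ V 0
            exact absurd (key y hyp 0 (Nat.zero_le p) u h hui) hy0
          · exact key y hyp j hjp v h hvj
  · -- i ≠ 0, u ∈ V i with i ≥ 1
    refine ⟨i, ⟨hip, ?_⟩, ?_⟩
    · rw [if_neg hi0]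
      exact (SimpleGraph.Subgraph.mem_edgeSet).mpr ⟨he, Or.inl hui⟩
    · rintro y ⟨hyp, hy⟩
      by_cases hy0 : y = 0
      · subst hy0
        rw [if_pos rfl] at hy
        have := (SimpleGraph.Subgraph.mem_edgeSet).mp hy
        exact absurd (key 0 (Nat.zero_le p) i hip u this.2.1 hui).symm hi0
      · rw [if_neg hy0] at hy
        have := (SimpleGraph.Subgraph.mem_edgeSet).mp hy
        rcases this.2 with h | h
        · exact key y hyp i hip u h hui
        · -- v ∈ V y, y ≥ 1; v ∈ V j
          have hyj : y = j := key y hyp j hjp v h hvj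
          subst hyj
          by_cases hij : i = y
          · exact hij.symm
          · -- i ≠ y, both ≥ 1: contradiction with hsep
            have hj0' : y ≠ 0 := hy0
            exact absurd he (hsep i y (Nat.one_le_iff_ne_zero.mpr hi0) hip
              (Nat.one_le_iff_ne_zero.mpr hj0') hyp hij u hui v h)
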